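/- Let A and B be nonempty finite sets, u : A × B → ℝ, and α ∈ ℝ. Suppose that for every probability vector q on B (i.e., q : B → ℝ with q(b) ≥ 0 for all b and ∑_{b∈B} q(b) = 1) there exists a ∈ A with ∑_{b∈B} q(b)·u(a,b) ≤ α. Then there exists a probability vector p on A such that for every b ∈ B, ∑_{a∈A} p(a)·u(a,b) ≤ α. -/

import Mathlib

/-- The consequence of von Neumann's Minimax Theorem for finite two-player zero-sum
games used in the paper (Proposition 2.1 / Lemma 3.3): if for every mixed strategy
`q` of the adversary (over `B`) the minimizing player has a pure response `a ∈ A`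
achieving expected utility at most `α`, then the minimizing player has a mixed
strategy `p` (over `A`) guaranteeing expected utility at most `α` against every pure
adversary strategy `b ∈ B`. -/
theorem stmt_6 {A B : Type*} [Fintype A] [Fintype B] [Nonempty A] [Nonempty B]
    (u : A × B → ℝ) (α : ℝ)
    (h : ∀ q : B → ℝ, (∀ b, 0 ≤ q b) → (∑ b, q b = 1) →
      ∃ a : A, ∑ b, q b * u (a, b) ≤ α) :
    ∃ p : A → ℝ, (∀ a, 0 ≤ p a) ∧ (∑ a, p a = 1) ∧
      ∀ b : B, ∑ a, p a * u (a, b) ≤ α := by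
  classical
  by_contra hcon
  push_neg at hcon
  -- the linear "expected payoff" map
  let L : (A → ℝ) →ₗ[ℝ] (B → ℝ) :=
    { toFun := fun p b => ∑ a, p a * u (a, b)
      map_add' := by
        intro p q; funext b
        simp [add_mul, Finset.sum_add_distrib]
      map_smul' := by
        intro r p; funext b
        simp [Finset.mul_sum, mul_assoc] }
  have hLcont : Continuous L := L.continuous_of_finiteDimensional
  set S : Set (B → ℝ) := L '' (stdSimplex ℝ A) with hSdef
  set T : Set (B → ℝ) := {x | ∀ b, x b ≤ α} with hTdef
  have hSconv : Convex ℝ S := (convex_stdSimplex ℝ A).linear_image L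
  have hScomp : IsCompact S := (isCompact_stdSimplex ℝ A).image hLcont
  have hTconv : Convex ℝ T := by
    intro x hx y hy s t hs ht hst b
    have h1 : s * x b + t * y b ≤ s * α + t * α :=
      add_le_add (mul_le_mul_of_nonneg_left (hx b) hs)
        (mul_le_mul_of_nonneg_left (hy b) ht)
    have h2 : s * α + t * α = α := by rw [← add_mul, hst, one_mul]
    show s * x b + t * y b ≤ α
    linarith
  have hTclosed : IsClosed T := by
    have : T = ⋂ b, (fun x : B → ℝ => x b) ⁻¹' Set.Iic α := by
      ext x; simp [hTdef]
    rw [this]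
    exact isClosed_iInter fun b => (isClosed_Iic).preimage (continuous_apply b)
  have hdisj : Disjoint S T := by
    rw [Set.disjoint_left]
    rintro x ⟨p, hp, rfl⟩ hxT
    obtain ⟨b, hb⟩ := hcon p hp.1 hp.2
    exact absurd (hxT b) (not_le.2 hb)
  obtain ⟨f, c, d, hfT, hcd, hfS⟩ :=
    geometric_hahn_banach_closed_compact hTconv hTclosed hSconv hScomp hdisj.symm
  set q : B → ℝ := fun b => f (Pi.single b 1) with hq
  have hfx : ∀ x : B → ℝ, f x = ∑ b, x b * q b := by
    intro x
    have hx : x = ∑ b, x b • (Pi.single b 1 : B → ℝ) := by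
      funext b'
      rw [Finset.sum_apply]
      simp [Pi.single_apply, mul_ite, Finset.sum_ite_eq, Finset.sum_ite_eq']
    conv_lhs => rw [hx]
    rw [map_sum]
    simp [smul_eq_mul]
    rfl
  -- the constant-α vector is in T
  have hx0T : (fun _ : B => α) ∈ T := fun b => le_refl α
  have hfx0 : f (fun _ : B => α) = α * ∑ b, q b := by
    rw [hfx]; rw [Finset.mul_sum]
  -- q is nonnegative
  have hqnn : ∀ b, 0 ≤ q b := by
    intro b0
    by_contra hqb
    push_neg at hqb
    have hne : q b0 ≠ 0 := ne_of_lt hqb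
    set x0 : B → ℝ := fun _ => α with hx0
    set e : B → ℝ := (Pi.single b0 1 : B → ℝ) with he
    set t : ℝ := (c - f x0) / (-q b0) with ht
    have hfx0c : f x0 < c := hfT _ hx0T
    have htpos : 0 ≤ t := le_of_lt (div_pos (by linarith) (by linarith))
    have hmem : x0 - t • e ∈ T := by
      intro b'
      show α - t * e b' ≤ α
      by_cases hb : b' = b0
      · subst hb
        have h1 : e b' = 1 := by simp [he]
        rw [h1]
        linarith
      · have h0 : e b' = 0 := by simp [he, Pi.single_apply, hb]
        rw [h0]
        simp
    have hlt : f (x0 - t • e) < c := hfT _ hmem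
    have heq1 : f (x0 - t • e) = f x0 - t * q b0 := by
      rw [map_sub, map_smul]
      simp [smul_eq_mul, he, hq]
    have hne' : -q b0 ≠ 0 := neg_ne_zero.mpr hne
    have heq2 : t * q b0 = -(c - f x0) := by
      rw [ht, div_mul_eq_mul_div, div_eq_iff hne']
      ring
    rw [heq1, heq2] at hlt
    linarith
  set Q : ℝ := ∑ b, q b with hQ
  have hQnn : 0 ≤ Q := Finset.sum_nonneg fun b _ => hqnn b
  -- some element of S
  obtain ⟨a0⟩ := ‹Nonempty A›
  have hrow : ∀ a : A, L (Pi.single a 1) ∈ S :=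
    fun a => ⟨Pi.single a 1, single_mem_stdSimplex ℝ a, rfl⟩
  have hQpos : 0 < Q := by
    rcases hQnn.lt_or_eq with hlt | heq
    · exact hlt
    have hz : ∀ b, q b = 0 := by
      intro b
      have := (Finset.sum_eq_zero_iff_of_nonneg (fun b _ => hqnn b)).1 heq.symm
      exact this b (Finset.mem_univ b)
    have h1 : f (fun _ : B => α) < c := hfT _ hx0T
    have h2 : d < f (L (Pi.single a0 1)) := hfS _ (hrow a0)
    rw [hfx] at h1 h2
    simp only [hz, mul_zero, Finset.sum_const_zero] at h1 h2
    linarith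
  -- apply the hypothesis with q / Q
  obtain ⟨a, ha⟩ := h (fun b => q b / Q) (fun b => div_nonneg (hqnn b) hQnn)
    (by rw [← Finset.sum_div]; field_simp; exact hQ.symm)
  have hrowval : f (L (Pi.single a 1)) = ∑ b, u (a, b) * q b := by
    rw [hfx]
    refine Finset.sum_congr rfl fun b _ => ?_
    have h1 : L (Pi.single a 1) b = ∑ a' : A, (Pi.single a 1 : A → ℝ) a' * u (a', b) := rfl
    rw [h1]
    congr 1
    simp [Pi.single_apply, ite_mul, Finset.sum_ite_eq, Finset.sum_ite_eq']
  have h2 : d < ∑ b, u (a, b) * q b := hrowval ▸ hfS _ (hrow a)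
  have h1 : α * Q < c := hfx0 ▸ hfT _ hx0T
  have hsum : ∑ b, u (a, b) * q b ≤ α * Q := by
    have := mul_le_mul_of_nonneg_right ha hQnn
    rw [Finset.sum_mul] at this
    calc ∑ b, u (a, b) * q b = ∑ b, q b / Q * u (a, b) * Q := by
          congr 1; funext b; field_simp
      _ ≤ α * Q := this
  linarith
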